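/- Let P_R ⊂ Γ^d = {(η, η², ..., η^d) : η ∈ [0,1]} with |P_R| ≥ c R^{2d/p}, and suppose (1/R^d)∫_{[0,R]^d}|∑_{ξ∈P_R} a_ξ e(ξ·x)|^p dx ≤ C‖a_ξ‖_{ℓ²}^p for all complex a_ξ, with constants independent of R. Then p ≥ d(d+1). -/

import Mathlib

open MeasureTheory Complex

noncomputable def e (z : ℝ) : ℂ := Complex.exp (2 * Real.pi * Complex.I * z)

/-! ### Auxiliary lemmas -/

lemma phase_expand' (d : ℕ) (η₀ t : ℝ) (x : Fin d → ℝ) :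
    ∑ k : Fin d, (η₀ + t) ^ (k.1 + 1) * x k
      = (∑ k : Fin d, η₀ ^ (k.1 + 1) * x k)
        + ∑ j : Fin d, t ^ (j.1 + 1) *
            ∑ k : Fin d, ((k.1+1).choose (j.1+1) : ℝ) * η₀ ^ (k.1 - j.1) * x k := by
  have swap : ∑ j : Fin d, t ^ (j.1 + 1) *
      ∑ k : Fin d, ((k.1+1).choose (j.1+1) : ℝ) * η₀ ^ (k.1 - j.1) * x k
      = ∑ k : Fin d, ∑ j : Fin d,
          t ^ (j.1 + 1) * (((k.1+1).choose (j.1+1) : ℝ) * η₀ ^ (k.1 - j.1)) * x k := by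
    simp_rw [Finset.mul_sum]
    rw [Finset.sum_comm]
    exact Finset.sum_congr rfl fun k _ => Finset.sum_congr rfl fun j _ => by ring
  rw [swap, ← Finset.sum_add_distrib]
  refine Finset.sum_congr rfl fun k _ => ?_
  rw [← Finset.sum_mul, ← add_mul]
  congr 1
  have hk : k.1 + 1 ≤ d := k.2
  have expand : (η₀ + t) ^ (k.1 + 1)
      = ∑ m ∈ Finset.range (k.1 + 2), t ^ m * η₀ ^ (k.1 + 1 - m) * ((k.1+1).choose m : ℝ) := by
    rw [add_comm η₀ t]; exact add_pow t η₀ (k.1+1)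
  rw [expand, Finset.sum_range_succ' _ (k.1+1)]
  simp only [pow_zero, Nat.sub_zero, Nat.choose_zero_right, Nat.cast_one, one_mul, mul_one]
  rw [add_comm]
  congr 1
  have hsub : Finset.range (k.1+1) ⊆ Finset.range d := Finset.range_subset_range.mpr hk
  rw [Fin.sum_univ_eq_sum_range (fun j => t ^ (j + 1) * (((k.1+1).choose (j+1) : ℝ) * η₀ ^ (k.1 - j)))]
  rw [← Finset.sum_subset hsub (by
    intro j _ hj
    simp only [Finset.mem_range, not_lt] at hj
    have : (k.1+1).choose (j+1) = 0 := Nat.choose_eq_zero_of_lt (by omega)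
    simp [this])]
  refine Finset.sum_congr rfl fun j hj => ?_
  have hjk : j ≤ k.1 := by simp at hj; omega
  have : k.1 + 1 - (j + 1) = k.1 - j := by omega
  rw [this]; ring

lemma choose_le_two_pow' (n k : ℕ) : n.choose k ≤ 2 ^ n := by
  rcases le_or_gt k n with h | h
  · calc n.choose k ≤ ∑ i ∈ Finset.range (n+1), n.choose i :=
        Finset.single_le_sum (fun i _ => Nat.zero_le _) (Finset.mem_range.mpr (by omega))
    _ = 2 ^ n := Nat.sum_range_choose n
  · simp [Nat.choose_eq_zero_of_lt h]

lemma coord_bound' (d : ℕ) (η₀ : ℝ) (hη₀ : 0 ≤ η₀) (hη₁ : η₀ ≤ 1) (ε : ℝ) (hε : 0 ≤ ε)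
    (x : Fin d → ℝ)
    (hy : ∀ j : Fin d, |∑ k : Fin d, ((k.1+1).choose (j.1+1) : ℝ) * η₀ ^ (k.1 - j.1) * x k| ≤ ε) :
    ∀ k : Fin d, |x k| ≤ ((d:ℝ) * 2^d + 1) ^ d * ε := by
  set β : ℝ := (d:ℝ) * 2^d + 1 with hβdef
  have h2d : (0:ℝ) ≤ (d:ℝ) * 2^d := by positivity
  have hβ1 : (1:ℝ) ≤ β := by rw [hβdef]; linarith
  have hsplit : ∀ k : Fin d, x k = (∑ m : Fin d, ((m.1+1).choose (k.1+1) : ℝ) * η₀ ^ (m.1 - k.1) * x m)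
      - ∑ m ∈ Finset.univ.filter (fun m : Fin d => k < m),
          ((m.1+1).choose (k.1+1) : ℝ) * η₀ ^ (m.1 - k.1) * x m := by
    intro k
    have h1 : ∑ m : Fin d, ((m.1+1).choose (k.1+1) : ℝ) * η₀ ^ (m.1 - k.1) * x m
        = x k + ∑ m ∈ Finset.univ.erase k, ((m.1+1).choose (k.1+1) : ℝ) * η₀ ^ (m.1 - k.1) * x m := by
      rw [← Finset.add_sum_erase _ _ (Finset.mem_univ k)]
      simp
    have h2 : ∑ m ∈ Finset.univ.erase k, ((m.1+1).choose (k.1+1) : ℝ) * η₀ ^ (m.1 - k.1) * x m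
        = ∑ m ∈ Finset.univ.filter (fun m : Fin d => k < m),
            ((m.1+1).choose (k.1+1) : ℝ) * η₀ ^ (m.1 - k.1) * x m := by
      refine (Finset.sum_subset ?_ ?_).symm
      · intro m hm
        simp only [Finset.mem_filter, Finset.mem_univ, true_and] at hm
        exact Finset.mem_erase.mpr ⟨ne_of_gt hm, Finset.mem_univ m⟩
      · intro m hm hnm
        simp only [Finset.mem_filter, Finset.mem_univ, true_and, not_lt] at hnm
        have hme : m ≠ k := (Finset.mem_erase.mp hm).1
        have : m < k := lt_of_le_of_ne hnm hme
        have : (m.1+1).choose (k.1+1) = 0 := Nat.choose_eq_zero_of_lt (by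
          have := (Fin.lt_iff_val_lt_val.mp this); omega)
        simp [this]
    rw [h1, h2]; ring
  have hcoef : ∀ j m : Fin d, |((m.1+1).choose (j.1+1) : ℝ) * η₀ ^ (m.1 - j.1)| ≤ 2 ^ d := by
    intro j m
    rw [abs_mul]
    have h1 : |((m.1+1).choose (j.1+1) : ℝ)| ≤ 2 ^ d := by
      rw [_root_.abs_of_nonneg (by positivity)]
      calc ((m.1+1).choose (j.1+1) : ℝ) ≤ ((2:ℕ) ^ (m.1+1) : ℕ) := by
            exact_mod_cast choose_le_two_pow' (m.1+1) (j.1+1)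
        _ ≤ 2 ^ d := by
            have : m.1 + 1 ≤ d := m.2
            exact_mod_cast Nat.pow_le_pow_right (by norm_num) this
    have h2 : |η₀ ^ (m.1 - j.1)| ≤ 1 := by
      rw [_root_.abs_of_nonneg (by positivity)]
      exact pow_le_one₀ hη₀ hη₁
    calc |((m.1+1).choose (j.1+1) : ℝ)| * |η₀ ^ (m.1 - j.1)| ≤ 2^d * 1 :=
          mul_le_mul h1 h2 (abs_nonneg _) (by positivity)
      _ = 2^d := by ring
  have main : ∀ n : ℕ, ∀ k : Fin d, d - 1 - k.1 ≤ n → |x k| ≤ β ^ n * ε := by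
    intro n
    induction n with
    | zero =>
      intro k hk
      have hkd : k.1 = d - 1 := by have := k.2; omega
      have hempty : Finset.univ.filter (fun m : Fin d => k < m) = ∅ := by
        refine Finset.filter_false_of_mem ?_
        intro m _
        have := m.2
        simp only [not_lt, Fin.le_iff_val_le_val]
        omega
      have := hsplit k
      rw [hempty, Finset.sum_empty, sub_zero] at this
      rw [this]
      simpa using hy k
    | succ n ih =>
      intro k hk
      rw [hsplit k]
      have hb1 : |∑ m : Fin d, ((m.1+1).choose (k.1+1) : ℝ) * η₀ ^ (m.1 - k.1) * x m| ≤ ε := hy k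
      have hb2 : |∑ m ∈ Finset.univ.filter (fun m : Fin d => k < m),
          ((m.1+1).choose (k.1+1) : ℝ) * η₀ ^ (m.1 - k.1) * x m| ≤ (d:ℝ) * (2^d * (β ^ n * ε)) := by
        calc |∑ m ∈ Finset.univ.filter (fun m : Fin d => k < m),
            ((m.1+1).choose (k.1+1) : ℝ) * η₀ ^ (m.1 - k.1) * x m|
            ≤ ∑ m ∈ Finset.univ.filter (fun m : Fin d => k < m),
              |((m.1+1).choose (k.1+1) : ℝ) * η₀ ^ (m.1 - k.1) * x m| := Finset.abs_sum_le_sum_abs _ _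
          _ ≤ ∑ m ∈ Finset.univ.filter (fun m : Fin d => k < m), 2^d * (β ^ n * ε) := by
              refine Finset.sum_le_sum fun m hm => ?_
              simp only [Finset.mem_filter, Finset.mem_univ, true_and] at hm
              have hxm : |x m| ≤ β ^ n * ε := by
                refine ih m ?_
                have h1 : k.1 < m.1 := Fin.lt_iff_val_lt_val.mp hm
                omega
              rw [abs_mul]
              exact mul_le_mul (hcoef k m) hxm (abs_nonneg _) (by positivity)
          _ ≤ (d:ℝ) * (2^d * (β ^ n * ε)) := by
              rw [Finset.sum_const, nsmul_eq_mul]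
              have hcard : ((Finset.univ.filter (fun m : Fin d => k < m)).card : ℝ) ≤ (d:ℝ) := by
                have := Finset.card_filter_le (Finset.univ : Finset (Fin d)) (fun m => k < m)
                have h2 : (Finset.univ : Finset (Fin d)).card = d := by simp
                exact_mod_cast le_trans this (le_of_eq h2)
              exact mul_le_mul_of_nonneg_right hcard (by positivity)
      calc |(∑ m : Fin d, ((m.1+1).choose (k.1+1) : ℝ) * η₀ ^ (m.1 - k.1) * x m)
          - ∑ m ∈ Finset.univ.filter (fun m : Fin d => k < m),
              ((m.1+1).choose (k.1+1) : ℝ) * η₀ ^ (m.1 - k.1) * x m|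
          ≤ ε + (d:ℝ) * (2^d * (β ^ n * ε)) := by
            refine le_trans (abs_sub _ _) (add_le_add hb1 hb2)
        _ ≤ β ^ (n+1) * ε := by
            have h1 : (1:ℝ) ≤ β ^ n := one_le_pow₀ hβ1
            have : β ^ (n+1) = ((d:ℝ) * 2^d) * β ^ n + β ^ n := by rw [pow_succ]; ring
            rw [this]
            nlinarith [hε, h1]
  intro k
  calc |x k| ≤ β ^ (d - 1 - k.1) * ε := main _ k le_rfl
    _ ≤ β ^ d * ε := by
        refine mul_le_mul_of_nonneg_right (pow_le_pow_right₀ hβ1 (by omega)) hε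

lemma vol_E' (d : ℕ) (η₀ : ℝ) (ε : Fin d → ℝ) :
    volume {x : Fin d → ℝ | ∀ j : Fin d,
        |∑ k : Fin d, ((k.1+1).choose (j.1+1) : ℝ) * η₀ ^ (k.1 - j.1) * x k| ≤ ε j}
      = ∏ j : Fin d, ENNReal.ofReal (2 * ε j) := by
  set Mm : Matrix (Fin d) (Fin d) ℝ :=
    fun j k => ((k.1+1).choose (j.1+1) : ℝ) * η₀ ^ (k.1 - j.1) with hMm
  have htri : Mm.BlockTriangular id := by
    intro i j hij
    simp only [id_eq] at hij
    have : (j.1+1).choose (i.1+1) = 0 := Nat.choose_eq_zero_of_lt (by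
      have := Fin.lt_iff_val_lt_val.mp hij; omega)
    simp [hMm, this]
  have hdet : Mm.det = 1 := by
    rw [Matrix.det_of_upperTriangular htri]
    refine Finset.prod_eq_one fun i _ => ?_
    simp [hMm]
  have hdet' : LinearMap.det (Matrix.toLin' Mm) = 1 := by
    rw [LinearMap.det_toLin', hdet]
  have hset : {x : Fin d → ℝ | ∀ j : Fin d,
        |∑ k : Fin d, ((k.1+1).choose (j.1+1) : ℝ) * η₀ ^ (k.1 - j.1) * x k| ≤ ε j}
      = (Matrix.toLin' Mm) ⁻¹' (Set.univ.pi fun j : Fin d => Set.Icc (-(ε j)) (ε j)) := by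
    ext x
    simp only [Set.mem_setOf_eq, Set.mem_preimage, Set.mem_pi, Set.mem_univ, true_implies,
      Set.mem_Icc, Matrix.toLin'_apply, Matrix.mulVec, dotProduct, hMm]
    exact forall_congr' fun j => abs_le
  rw [hset, Measure.addHaar_preimage_linearMap volume (by rw [hdet']; norm_num), hdet']
  rw [volume_pi_pi]
  simp only [Real.volume_Icc]
  norm_num
  exact Finset.prod_congr rfl fun j _ => by ring_nf; rw [ENNReal.ofReal_mul' (by norm_num : (0:ℝ) ≤ 2), ENNReal.ofReal_ofNat]

lemma e_add' (a b : ℝ) : e (a + b) = e a * e b := by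
  unfold e
  rw [← Complex.exp_add]
  congr 1
  push_cast
  ring

lemma norm_e' (z : ℝ) : ‖e z‖ = 1 := by
  unfold e
  rw [Complex.norm_exp]
  have : (2 * (Real.pi:ℂ) * Complex.I * (z:ℂ)).re = 0 := by
    simp [Complex.mul_re, Complex.mul_im]
  rw [this, Real.exp_zero]

lemma re_e' (z : ℝ) : (e z).re = Real.cos (2 * Real.pi * z) := by
  unfold e
  have : 2 * (Real.pi:ℂ) * Complex.I * (z:ℂ) = ((2 * Real.pi * z : ℝ) : ℂ) * Complex.I := by
    push_cast; ring
  rw [this, Complex.exp_ofReal_mul_I_re]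

lemma re_e_ge' (z : ℝ) (hz : |z| ≤ 1/6) : 1/2 ≤ (e z).re := by
  rw [re_e']
  have h1 : Real.cos (2 * Real.pi * z) = Real.cos |2 * Real.pi * z| := (Real.cos_abs _).symm
  rw [h1]
  have hpi : 0 < Real.pi := Real.pi_pos
  have h2 : |2 * Real.pi * z| ≤ Real.pi / 3 := by
    rw [abs_mul, _root_.abs_of_nonneg (by positivity : (0:ℝ) ≤ 2 * Real.pi)]
    calc 2 * Real.pi * |z| ≤ 2 * Real.pi * (1/6) := by nlinarith [abs_nonneg z]
      _ = Real.pi / 3 := by ring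
  have h3 : Real.cos (Real.pi / 3) ≤ Real.cos |2 * Real.pi * z| :=
    Real.cos_le_cos_of_nonneg_of_le_pi (abs_nonneg _) (by linarith) h2
  rw [Real.cos_pi_div_three] at h3
  linarith

lemma interf' (τ : Finset ℝ) (ψ₀ : ℝ) (θ : ℝ → ℝ) (h : ∀ η ∈ τ, |θ η| ≤ 1/6) :
    (τ.card : ℝ)/2 ≤ ‖∑ η ∈ τ, e (ψ₀ + θ η)‖ := by
  have h1 : ∑ η ∈ τ, e (ψ₀ + θ η) = e ψ₀ * ∑ η ∈ τ, e (θ η) := by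
    rw [Finset.mul_sum]
    exact Finset.sum_congr rfl fun η _ => e_add' _ _
  rw [h1, norm_mul, norm_e', one_mul]
  have h2 : (τ.card : ℝ)/2 ≤ (∑ η ∈ τ, e (θ η)).re := by
    rw [Complex.re_sum]
    calc (τ.card : ℝ)/2 = ∑ _η ∈ τ, (1/2 : ℝ) := by
          rw [Finset.sum_const, nsmul_eq_mul]; ring
      _ ≤ ∑ η ∈ τ, (e (θ η)).re := Finset.sum_le_sum fun η hη => re_e_ge' _ (h η hη)
  exact le_trans h2 (Complex.re_le_norm _)

lemma continuous_e' : Continuous e := by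
  unfold e
  exact Complex.continuous_exp.comp (by continuity)

lemma pigeon' (P : Finset ℝ) (hP : ∀ η ∈ P, η ∈ Set.Icc (0:ℝ) 1) (N : ℕ) (hN : 0 < N) :
    ∃ i : ℕ, i < N ∧
      (P.card : ℝ) / N ≤ ((P.filter (fun η : ℝ => min ⌊η * (N:ℝ)⌋₊ (N-1) = i)).card : ℝ) ∧
      ∀ η ∈ P.filter (fun η : ℝ => min ⌊η * (N:ℝ)⌋₊ (N-1) = i),
        (i:ℝ)/N ≤ η ∧ η ≤ ((i:ℝ)+1)/N := by
  have hN' : (0:ℝ) < N := by exact_mod_cast hN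
  have hmaps : ∀ η ∈ P, min ⌊η * (N:ℝ)⌋₊ (N-1) ∈ Finset.range N :=
    fun η _ => Finset.mem_range.mpr (by omega)
  have hcard := Finset.card_eq_sum_card_fiberwise hmaps
  have hsum : ∑ i ∈ Finset.range N, (P.card : ℝ) / N
      ≤ ∑ i ∈ Finset.range N, ((P.filter (fun η : ℝ => min ⌊η * (N:ℝ)⌋₊ (N-1) = i)).card : ℝ) := by
    rw [Finset.sum_const, Finset.card_range, nsmul_eq_mul,
      mul_div_cancel₀ _ (ne_of_gt hN')]
    rw [hcard]
    push_cast
    exact le_refl _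
  obtain ⟨i, hi, hle⟩ := Finset.exists_le_of_sum_le ⟨0, Finset.mem_range.mpr hN⟩ hsum
  refine ⟨i, Finset.mem_range.mp hi, hle, ?_⟩
  intro η hη
  rw [Finset.mem_filter] at hη
  obtain ⟨hηP, hfη⟩ := hη
  obtain ⟨hη0, hη1⟩ := hP η hηP
  have hηN : (0:ℝ) ≤ η * N := by positivity
  rcases le_or_gt ⌊η * (N:ℝ)⌋₊ (N-1) with hcase | hcase
  · have hi' : i = ⌊η * (N:ℝ)⌋₊ := by omega
    constructor
    · rw [div_le_iff₀ hN', hi']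
      exact_mod_cast Nat.floor_le hηN
    · rw [le_div_iff₀ hN', hi']
      have := Nat.lt_floor_add_one (η * (N:ℝ))
      push_cast at this ⊢
      linarith
  · have hi' : i = N - 1 := by omega
    constructor
    · rw [div_le_iff₀ hN']
      have h1 : ((N:ℝ) - 1) ≤ ⌊η * (N:ℝ)⌋₊ := by
        have : N - 1 < ⌊η * (N:ℝ)⌋₊ := hcase
        have : (N:ℕ) ≤ ⌊η * (N:ℝ)⌋₊ := by omega
        calc ((N:ℝ) - 1) ≤ (N:ℝ) := by linarith
          _ ≤ (⌊η * (N:ℝ)⌋₊ : ℝ) := by exact_mod_cast this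
      have h2 : (⌊η * (N:ℝ)⌋₊ : ℝ) ≤ η * N := Nat.floor_le hηN
      have hi'' : (i:ℝ) = (N:ℝ) - 1 := by rw [hi']; push_cast [Nat.cast_sub hN]; ring
      linarith
    · rw [le_div_iff₀ hN']
      have hi'' : (i:ℝ) = (N:ℝ) - 1 := by rw [hi']; push_cast [Nat.cast_sub hN]; ring
      nlinarith

lemma gauss_sum' (d : ℕ) : ∑ j ∈ Finset.range d, ((j:ℝ)+1) = (d:ℝ)*((d:ℝ)+1)/2 := by
  induction d with
  | zero => simp
  | succ n ih =>
    rw [Finset.sum_range_succ, ih]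
    push_cast
    ring

set_option maxHeartbeats 1000000 in
lemma key_lemma' (d : ℕ) (p c C R₀ : ℝ)
    (hc : 0 < c) (hC : 0 < C)
    (P : ℝ → Finset ℝ)
    (hPloc : ∀ R ≥ R₀, ∀ η ∈ P R, η ∈ Set.Icc (0:ℝ) 1)
    (hPcard : ∀ R ≥ R₀, c * R ^ (2*(d:ℝ)/p) ≤ ((P R).card : ℝ))
    (hdec : ∀ R ≥ R₀, ∀ a : ℝ → ℂ,
      (1 / R ^ (d:ℝ)) *
          ∫ x in Set.univ.pi fun _ : Fin d => Set.Icc (0:ℝ) R,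
            ‖∑ η ∈ P R, a η * e (∑ i : Fin d, η ^ ((i:ℕ)+1) * x i)‖ ^ p
        ≤ C * Real.sqrt (∑ η ∈ P R, ‖a η‖ ^ 2) ^ p)
    (hd0 : (0:ℝ) < d) (hd1 : (1:ℝ) ≤ d) (hp0 : (0:ℝ) < p) (hp : 2 ≤ p)
    (β M : ℝ) (hβdef : β = (d:ℝ) * 2^d + 1)
    (hβ1 : (1:ℝ) ≤ β) (hβ0 : (0:ℝ) < β) (hβd1 : (1:ℝ) ≤ β ^ d)
    (hMdef : M = 6 * d * β ^ d) (hM0 : (0:ℝ) < M)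
    (K : ℝ) (hKdef : K = (2/M)^d * (1/2:ℝ)^p * (c/2)^(p/2))
    (α : ℝ) (hαdef : α = ((d:ℝ)+1)/2 - p/(2*(d:ℝ))) :
    ∀ R : ℝ, R₀ ≤ R → 1 ≤ R → K * R ^ α ≤ C := by
  intro R hRR₀ hR1
  have hR0 : (0:ℝ) < R := by linarith
  set ρ : ℝ := R ^ (1/(d:ℝ)) with hρdef
  have hρ1 : (1:ℝ) ≤ ρ := by
    rw [hρdef]
    calc (1:ℝ) = R ^ (0:ℝ) := (Real.rpow_zero R).symm
      _ ≤ R ^ (1/(d:ℝ)) := Real.rpow_le_rpow_of_exponent_le hR1 (by positivity)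
  have hρ0 : (0:ℝ) < ρ := by linarith
  set N := ⌈ρ⌉₊ with hNdef
  have hN0 : 0 < N := Nat.ceil_pos.mpr hρ0
  have hNpos : (0:ℝ) < N := by exact_mod_cast hN0
  have hNρ : ρ ≤ N := Nat.le_ceil ρ
  have hN2ρ : (N:ℝ) ≤ 2*ρ := by
    have := Nat.ceil_lt_add_one hρ0.le
    rw [hNdef]; linarith
  obtain ⟨i, hiN, hfib, hloc'⟩ := pigeon' (P R) (hPloc R hRR₀) N hN0
  set τ := (P R).filter (fun η : ℝ => min ⌊η * (N:ℝ)⌋₊ (N-1) = i) with hτdef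
  set T : ℝ := (τ.card : ℝ) with hTdef
  set η₀ : ℝ := (i:ℝ)/N with hη₀def
  have hη₀0 : 0 ≤ η₀ := by positivity
  have hη₀1 : η₀ ≤ 1 := by
    rw [hη₀def, div_le_one hNpos]
    exact_mod_cast le_of_lt hiN
  -- lower bound for T
  have hTlow : c/2 * R ^ (2*(d:ℝ)/p - 1/(d:ℝ)) ≤ T := by
    have h1 : c * R ^ (2*(d:ℝ)/p) / (2*ρ) ≤ ((P R).card : ℝ) / N :=
      div_le_div₀ (Nat.cast_nonneg _) (hPcard R hRR₀) hNpos hN2ρ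
    have h2 : c/2 * R ^ (2*(d:ℝ)/p - 1/(d:ℝ)) = c * R ^ (2*(d:ℝ)/p) / (2*ρ) := by
      rw [Real.rpow_sub hR0, hρdef]
      ring
    rw [h2]
    exact le_trans h1 hfib
  have hT0 : (0:ℝ) < T :=
    lt_of_lt_of_le (by positivity) (le_trans (le_of_eq rfl) hTlow)
  -- geometry
  classical
  set ε : Fin d → ℝ := fun j => R ^ (((j.1:ℝ)+1)/(d:ℝ)) / M with hεdef
  have hεpos : ∀ j, 0 < ε j := fun j => by
    simp only [hεdef]; exact div_pos (Real.rpow_pos_of_pos hR0 _) hM0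
  have hεle : ∀ j, ε j ≤ R / M := by
    intro j
    have h2 : ((j.1:ℝ)+1)/(d:ℝ) ≤ 1 := by
      rw [div_le_one hd0]
      exact_mod_cast j.2
    have h1 : R ^ (((j.1:ℝ)+1)/(d:ℝ)) ≤ R := by
      calc R ^ (((j.1:ℝ)+1)/(d:ℝ)) ≤ R ^ (1:ℝ) := Real.rpow_le_rpow_of_exponent_le hR1 h2
        _ = R := Real.rpow_one R
    simp only [hεdef]
    exact (div_le_div_iff_of_pos_right hM0).mpr h1
  have hvolE0 := vol_E' d η₀ ε
  set E : Set (Fin d → ℝ) := {x : Fin d → ℝ | ∀ j : Fin d,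
      |∑ k : Fin d, ((k.1+1).choose (j.1+1) : ℝ) * η₀ ^ (k.1 - j.1) * x k| ≤ ε j} with hEdef
  have hYcont : ∀ j : Fin d, Continuous (fun w : Fin d → ℝ =>
      ∑ k : Fin d, ((k.1+1).choose (j.1+1) : ℝ) * η₀ ^ (k.1 - j.1) * w k) :=
    fun j => continuous_finset_sum _ fun k _ => continuous_const.mul (continuous_apply k)
  have hEmeas : MeasurableSet E := by
    rw [hEdef, Set.setOf_forall]
    exact MeasurableSet.iInter fun j =>
      measurableSet_le ((hYcont j).abs.measurable) measurable_const
  set v : Fin d → ℝ := fun _ => R/2 with hvdef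
  set S : Set (Fin d → ℝ) := (fun x : Fin d → ℝ => x - v) ⁻¹' E with hSdef
  have hSmeas : MeasurableSet S :=
    (continuous_id.sub continuous_const).measurable hEmeas
  have hvolS : volume S = volume E := by
    have heq : (fun x : Fin d → ℝ => x - v) = fun x => x + (-v) := by
      funext x; exact sub_eq_add_neg x v
    rw [hSdef, heq, measure_preimage_add_right]
  have hS_fin : volume S ≠ ⊤ := by
    rw [hvolS, hvolE0]
    exact (ENNReal.prod_lt_top (fun j _ => ENNReal.ofReal_lt_top)).ne
  -- membership in E gives coordinate bounds
  have hsubS : S ⊆ Set.univ.pi fun _ : Fin d => Set.Icc (0:ℝ) R := by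
    intro x hx
    have hxE : ∀ j : Fin d,
        |∑ k : Fin d, ((k.1+1).choose (j.1+1) : ℝ) * η₀ ^ (k.1 - j.1) * (x - v) k| ≤ ε j := by
      have := hx
      rw [hSdef, Set.mem_preimage, hEdef, Set.mem_setOf_eq] at this
      exact this
    have hb := coord_bound' d η₀ hη₀0 hη₀1 (R/M) (by positivity) (x - v)
      (fun j => le_trans (hxE j) (hεle j))
    rw [Set.mem_univ_pi]
    intro k
    have h1 : |(x - v) k| ≤ β ^ d * (R/M) := by rw [hβdef]; exact hb k
    have hβdne : (β:ℝ) ^ d ≠ 0 := by positivity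
    have h2 : β ^ d * (R/M) = R/(6*(d:ℝ)) := by
      rw [hMdef]
      field_simp
    have h3 : R/(6*(d:ℝ)) ≤ R/2 :=
      div_le_div_of_nonneg_left hR0.le (by norm_num) (by nlinarith [hd1])
    have h4 : (x - v) k = x k - R/2 := by simp [hvdef]
    rw [h4, h2] at h1
    obtain ⟨hl, hr⟩ := abs_le.mp (le_trans h1 h3)
    exact ⟨by linarith, by linarith⟩
  -- arc parameters
  have harc : ∀ η ∈ τ, 0 ≤ η - η₀ ∧ η - η₀ ≤ ρ⁻¹ := by
    intro η hη
    obtain ⟨hl, hr⟩ := hloc' η hη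
    have hdiv : ((i:ℝ)+1)/N = η₀ + 1/N := by rw [hη₀def, add_div]
    have hNinv : 1/(N:ℝ) ≤ ρ⁻¹ := by
      rw [one_div]
      exact inv_anti₀ hρ0 hNρ
    rw [hdiv] at hr
    exact ⟨by linarith, by linarith⟩
  -- phase bound on S
  have hphase : ∀ x : Fin d → ℝ, x ∈ S → ∀ η ∈ τ,
      |∑ j : Fin d, (η - η₀) ^ (j.1+1) *
        ∑ k : Fin d, ((k.1+1).choose (j.1+1) : ℝ) * η₀ ^ (k.1 - j.1) * (x - v) k| ≤ 1/6 := by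
    intro x hx η hη
    obtain ⟨ht0, ht1⟩ := harc η hη
    have hxE : ∀ j : Fin d,
        |∑ k : Fin d, ((k.1+1).choose (j.1+1) : ℝ) * η₀ ^ (k.1 - j.1) * (x - v) k| ≤ ε j := by
      have := hx
      rw [hSdef, Set.mem_preimage, hEdef, Set.mem_setOf_eq] at this
      exact this
    have hterm : ∀ j : Fin d, |(η - η₀) ^ (j.1+1) *
        ∑ k : Fin d, ((k.1+1).choose (j.1+1) : ℝ) * η₀ ^ (k.1 - j.1) * (x - v) k| ≤ 1/M := by
      intro j
      have hρpow : ρ ^ (j.1+1) = R ^ (((j.1:ℝ)+1)/(d:ℝ)) := by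
        rw [hρdef, ← Real.rpow_natCast (R ^ (1/(d:ℝ))) (j.1+1), ← Real.rpow_mul hR0.le]
        congr 1
        push_cast
        field_simp
      have h1 : |(η - η₀) ^ (j.1+1)| ≤ (ρ⁻¹) ^ (j.1+1) := by
        rw [_root_.abs_of_nonneg (pow_nonneg ht0 _)]
        exact pow_le_pow_left₀ ht0 ht1 _
      have h2 : (ρ⁻¹) ^ (j.1+1) * ε j = 1/M := by
        rw [inv_pow, hρpow]
        simp only [hεdef]
        have hane : R ^ (((j.1:ℝ)+1)/(d:ℝ)) ≠ 0 := (Real.rpow_pos_of_pos hR0 _).ne'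
        field_simp
      rw [abs_mul]
      calc |(η - η₀) ^ (j.1+1)| *
          |∑ k : Fin d, ((k.1+1).choose (j.1+1) : ℝ) * η₀ ^ (k.1 - j.1) * (x - v) k|
          ≤ (ρ⁻¹) ^ (j.1+1) * ε j :=
            mul_le_mul h1 (hxE j) (abs_nonneg _) (pow_nonneg (inv_nonneg.mpr hρ0.le) _)
        _ = 1/M := h2
    calc |∑ j : Fin d, (η - η₀) ^ (j.1+1) *
          ∑ k : Fin d, ((k.1+1).choose (j.1+1) : ℝ) * η₀ ^ (k.1 - j.1) * (x - v) k|
        ≤ ∑ j : Fin d, |(η - η₀) ^ (j.1+1) *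
          ∑ k : Fin d, ((k.1+1).choose (j.1+1) : ℝ) * η₀ ^ (k.1 - j.1) * (x - v) k| :=
          Finset.abs_sum_le_sum_abs _ _
      _ ≤ ∑ _j : Fin d, 1/M := Finset.sum_le_sum fun j _ => hterm j
      _ = (d:ℝ) * (1/M) := by
          rw [Finset.sum_const, Finset.card_univ, Fintype.card_fin, nsmul_eq_mul]
      _ ≤ 1/6 := by
          rw [mul_one_div, div_le_div_iff₀ hM0 (by norm_num)]
          rw [hMdef]
          nlinarith [hβd1, hd0]
  -- test sequence
  set a : ℝ → ℂ := fun η =>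
    if η ∈ τ then e (-(∑ i : Fin d, η ^ ((i:ℕ)+1) * v i)) else 0 with hadef
  have hl2 : ∑ η ∈ P R, ‖a η‖ ^ 2 = T := by
    have h1 : ∑ η ∈ τ, ‖a η‖ ^ 2 = ∑ η ∈ P R, ‖a η‖ ^ 2 := by
      refine Finset.sum_subset (hτdef ▸ Finset.filter_subset _ (P R)) ?_
      intro η _ hη
      simp [hadef, hη]
    rw [← h1]
    have h2 : ∀ η ∈ τ, ‖a η‖ ^ 2 = 1 := by
      intro η hη
      simp only [hadef, if_pos hη]
      rw [norm_e']
      norm_num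
    rw [Finset.sum_congr rfl h2, Finset.sum_const, nsmul_eq_mul, mul_one, hTdef]
  -- pointwise lower bound on S
  have hlow : ∀ x ∈ S, (T/2 : ℝ) ≤
      ‖∑ η ∈ P R, a η * e (∑ i : Fin d, η ^ ((i:ℕ)+1) * x i)‖ := by
    intro x hx
    have hsum_eq : ∑ η ∈ P R, a η * e (∑ i : Fin d, η ^ ((i:ℕ)+1) * x i)
        = ∑ η ∈ τ, e ((∑ k : Fin d, η₀ ^ (k.1+1) * (x - v) k)
            + ∑ j : Fin d, (η - η₀) ^ (j.1+1) *
                ∑ k : Fin d, ((k.1+1).choose (j.1+1) : ℝ) * η₀ ^ (k.1 - j.1) * (x - v) k) := by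
      rw [← Finset.sum_subset (hτdef ▸ Finset.filter_subset _ (P R))
        (fun η _ hη => by simp [hadef, hη])]
      refine Finset.sum_congr rfl fun η hη => ?_
      simp only [hadef, if_pos hη]
      rw [← e_add']
      congr 1
      have hφ : -(∑ i : Fin d, η ^ ((i:ℕ)+1) * v i) + ∑ i : Fin d, η ^ ((i:ℕ)+1) * x i
          = ∑ k : Fin d, η ^ (k.1+1) * (x - v) k := by
        rw [neg_add_eq_sub, ← Finset.sum_sub_distrib]
        refine Finset.sum_congr rfl fun k _ => ?_
        simp only [Pi.sub_apply]
        ring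
      rw [hφ]
      have hpe := phase_expand' d η₀ (η - η₀) (x - v)
      rw [show η₀ + (η - η₀) = η by ring] at hpe
      exact hpe
    rw [hsum_eq, hTdef]
    exact interf' τ _ _ (fun η hη => hphase x hx η hη)
  -- integrability
  have hcont : Continuous (fun x : Fin d → ℝ =>
      ‖∑ η ∈ P R, a η * e (∑ i : Fin d, η ^ ((i:ℕ)+1) * x i)‖ ^ p) := by
    refine Continuous.rpow_const ?_ (fun x => Or.inr (by linarith))
    refine Continuous.norm ?_
    refine continuous_finset_sum _ fun η _ => ?_
    exact continuous_const.mul (continuous_e'.comp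
      (continuous_finset_sum _ fun i _ => continuous_const.mul (continuous_apply i)))
  have hint : IntegrableOn (fun x : Fin d → ℝ =>
      ‖∑ η ∈ P R, a η * e (∑ i : Fin d, η ^ ((i:ℕ)+1) * x i)‖ ^ p)
      (Set.univ.pi fun _ : Fin d => Set.Icc (0:ℝ) R) volume :=
    by
    exact ContinuousOn.integrableOn_compact (isCompact_univ_pi fun _ => isCompact_Icc)
        hcont.continuousOn
  have hI1 : (T/2) ^ p * (volume S).toReal
      ≤ ∫ x in S, ‖∑ η ∈ P R, a η * e (∑ i : Fin d, η ^ ((i:ℕ)+1) * x i)‖ ^ p :=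
    by have := setIntegral_ge_of_const_le hSmeas hS_fin
        (fun x hx => Real.rpow_le_rpow (by linarith : (0:ℝ) ≤ T/2) (hlow x hx) (by linarith))
        (hint.mono_set hsubS)
       rw [smul_eq_mul, measureReal_def, mul_comm] at this; exact this
  have hI2 : (∫ x in S, ‖∑ η ∈ P R, a η * e (∑ i : Fin d, η ^ ((i:ℕ)+1) * x i)‖ ^ p)
      ≤ ∫ x in Set.univ.pi fun _ : Fin d => Set.Icc (0:ℝ) R,
          ‖∑ η ∈ P R, a η * e (∑ i : Fin d, η ^ ((i:ℕ)+1) * x i)‖ ^ p :=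
    setIntegral_mono_set hint
      (Filter.Eventually.of_forall fun x => Real.rpow_nonneg (norm_nonneg _) p)
      (HasSubset.Subset.eventuallyLE hsubS)
  have hdecR := hdec R hRR₀ a
  rw [hl2] at hdecR
  -- volume computation
  have hW : (volume S).toReal = (2/M)^d * R ^ (((d:ℝ)+1)/2) := by
    rw [hvolS, hvolE0, ENNReal.toReal_prod]
    have h1 : ∀ j : Fin d, (ENNReal.ofReal (2 * ε j)).toReal
        = (2/M) * R ^ (((j.1:ℝ)+1)/(d:ℝ)) := by
      intro j
      rw [ENNReal.toReal_ofReal (by linarith [hεpos j] : (0:ℝ) ≤ 2 * ε j)]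
      simp only [hεdef]
      ring
    rw [Finset.prod_congr rfl (fun j _ => h1 j), Finset.prod_mul_distrib, Finset.prod_const,
      Finset.card_univ, Fintype.card_fin]
    congr 1
    rw [← Real.rpow_sum_of_pos hR0]
    congr 1
    rw [← Finset.sum_div, Fin.sum_univ_eq_sum_range (fun j => ((j:ℝ)+1)), gauss_sum' d]
    field_simp
  -- main chain
  have hmain : (1/R^(d:ℝ)) * ((T/2)^p * ((2/M)^d * R ^ (((d:ℝ)+1)/2)))
      ≤ C * Real.sqrt T ^ p := by
    have h1 : (T/2)^p * ((2/M)^d * R ^ (((d:ℝ)+1)/2))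
        ≤ ∫ x in Set.univ.pi fun _ : Fin d => Set.Icc (0:ℝ) R,
            ‖∑ η ∈ P R, a η * e (∑ i : Fin d, η ^ ((i:ℕ)+1) * x i)‖ ^ p := by
      rw [← hW]
      exact le_trans hI1 hI2
    calc (1/R^(d:ℝ)) * ((T/2)^p * ((2/M)^d * R ^ (((d:ℝ)+1)/2)))
        ≤ (1/R^(d:ℝ)) * ∫ x in Set.univ.pi fun _ : Fin d => Set.Icc (0:ℝ) R,
            ‖∑ η ∈ P R, a η * e (∑ i : Fin d, η ^ ((i:ℕ)+1) * x i)‖ ^ p :=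
          mul_le_mul_of_nonneg_left h1 (by positivity)
      _ ≤ C * Real.sqrt T ^ p := hdecR
  have hsqrt : Real.sqrt T ^ p = T ^ (p/2) := by
    rw [Real.sqrt_eq_rpow, ← Real.rpow_mul hT0.le]
    congr 1
    ring
  have hT2 : (T/2)^p = T^(p/2) * T^(p/2) * (1/2:ℝ)^p := by
    have h1 : T/2 = T * (1/2) := by ring
    rw [h1, Real.mul_rpow hT0.le (by norm_num : (0:ℝ) ≤ 1/2)]
    have h2 : T^p = T^(p/2) * T^(p/2) := by
      rw [← Real.rpow_add hT0]
      congr 1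
      ring
    rw [h2]
  rw [hsqrt, hT2] at hmain
  have ht2pos : (0:ℝ) < T^(p/2) := Real.rpow_pos_of_pos hT0 _
  have hC1 : (1/R^(d:ℝ)) * (T^(p/2) * (1/2:ℝ)^p * ((2/M)^d * R ^ (((d:ℝ)+1)/2))) ≤ C := by
    have harr : (1/R^(d:ℝ)) * ((T^(p/2) * T^(p/2) * (1/2:ℝ)^p) * ((2/M)^d * R ^ (((d:ℝ)+1)/2)))
        = ((1/R^(d:ℝ)) * (T^(p/2) * (1/2:ℝ)^p * ((2/M)^d * R ^ (((d:ℝ)+1)/2)))) * T^(p/2) := by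
      ring
    rw [harr] at hmain
    exact le_of_mul_le_mul_right hmain ht2pos
  have hTq : (c/2)^(p/2) * R^((2*(d:ℝ)/p - 1/(d:ℝ)) * (p/2)) ≤ T^(p/2) := by
    have heq : (c/2)^(p/2) * R^((2*(d:ℝ)/p - 1/(d:ℝ)) * (p/2))
        = (c/2 * R^(2*(d:ℝ)/p - 1/(d:ℝ)))^(p/2) := by
      rw [Real.mul_rpow (by linarith : (0:ℝ) ≤ c/2) (Real.rpow_nonneg hR0.le _)]
      congr 1
      rw [← Real.rpow_mul hR0.le]
    rw [heq]
    exact Real.rpow_le_rpow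
      (mul_nonneg (by linarith) (Real.rpow_nonneg hR0.le _)) hTlow (by linarith)
  have hexp : R ^ α = (1/R^(d:ℝ)) *
      (R^((2*(d:ℝ)/p - 1/(d:ℝ)) * (p/2)) * R ^ (((d:ℝ)+1)/2)) := by
    rw [one_div, ← Real.rpow_neg hR0.le,
      ← Real.rpow_add hR0 ((2*(d:ℝ)/p - 1/(d:ℝ)) * (p/2)) (((d:ℝ)+1)/2),
      ← Real.rpow_add hR0]
    congr 1
    rw [hαdef]
    field_simp
    ring
  have hfin : K * R ^ α ≤
      (1/R^(d:ℝ)) * (T^(p/2) * (1/2:ℝ)^p * ((2/M)^d * R ^ (((d:ℝ)+1)/2))) := by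
    have hstep : K * R ^ α = (1/R^(d:ℝ)) *
        (((c/2)^(p/2) * R^((2*(d:ℝ)/p - 1/(d:ℝ)) * (p/2))) * (1/2:ℝ)^p *
          ((2/M)^d * R ^ (((d:ℝ)+1)/2))) := by
      rw [hKdef, hexp]
      ring
    rw [hstep]
    refine mul_le_mul_of_nonneg_left ?_ (by positivity)
    refine mul_le_mul_of_nonneg_right (mul_le_mul_of_nonneg_right hTq ?_) ?_
    · exact Real.rpow_nonneg (by norm_num) _
    · have := Real.rpow_nonneg hR0.le (((d:ℝ)+1)/2)
      positivity
  exact le_trans hfin hC1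

theorem stmt18 (d : ℕ) (hd : 1 ≤ d) (p c C R₀ : ℝ) (hp : 2 ≤ p)
    (hc : 0 < c) (hC : 0 < C) (hR₀ : 1 ≤ R₀)
    (P : ℝ → Finset ℝ)
    (hPloc : ∀ R ≥ R₀, ∀ η ∈ P R, η ∈ Set.Icc (0:ℝ) 1)
    (hPcard : ∀ R ≥ R₀, c * R ^ (2*(d:ℝ)/p) ≤ ((P R).card : ℝ))
    (hdec : ∀ R ≥ R₀, ∀ a : ℝ → ℂ,
      (1 / R ^ (d:ℝ)) *
          ∫ x in Set.univ.pi fun _ : Fin d => Set.Icc (0:ℝ) R,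
            ‖∑ η ∈ P R, a η * e (∑ i : Fin d, η ^ ((i:ℕ)+1) * x i)‖ ^ p
        ≤ C * Real.sqrt (∑ η ∈ P R, ‖a η‖ ^ 2) ^ p) :
    (d:ℝ) * ((d:ℝ) + 1) ≤ p := by
  by_contra hcon
  push_neg at hcon
  have hd0 : (0:ℝ) < d := by exact_mod_cast hd
  have hp0 : (0:ℝ) < p := by linarith
  set β : ℝ := (d:ℝ) * 2^d + 1 with hβdef
  have h2d : (0:ℝ) ≤ (d:ℝ) * 2^d := by positivity
  have hβ1 : (1:ℝ) ≤ β := by rw [hβdef]; linarith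
  have hβ0 : (0:ℝ) < β := by linarith
  have hβd1 : (1:ℝ) ≤ β ^ d := one_le_pow₀ hβ1
  set M : ℝ := 6 * d * β ^ d with hMdef
  have hM0 : (0:ℝ) < M := by
    have : (0:ℝ) < β ^ d := pow_pos hβ0 d
    rw [hMdef]; nlinarith
  set α : ℝ := ((d:ℝ)+1)/2 - p/(2*(d:ℝ)) with hαdef
  have hα0 : 0 < α := by
    have h1 : p/(2*(d:ℝ)) < ((d:ℝ)+1)/2 := by
      rw [div_lt_div_iff₀ (by linarith) (by norm_num)]
      nlinarith
    rw [hαdef]; linarith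
  set K : ℝ := (2/M)^d * (1/2:ℝ)^p * (c/2)^(p/2) with hKdef
  have hK0 : 0 < K := by
    have h1 : (0:ℝ) < (2/M)^d := pow_pos (by positivity) d
    have h2 : (0:ℝ) < (1/2:ℝ)^p := Real.rpow_pos_of_pos (by norm_num) p
    have h3 : (0:ℝ) < (c/2)^(p/2) := Real.rpow_pos_of_pos (by linarith) _
    rw [hKdef]; positivity
  -- ### main claim
  have hd1 : (1:ℝ) ≤ d := by exact_mod_cast hd
  have key : ∀ R : ℝ, R₀ ≤ R → 1 ≤ R → K * R ^ α ≤ C :=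
    key_lemma' d p c C R₀ hc hC P hPloc hPcard hdec hd0 hd1 hp0 hp β M hβdef hβ1 hβ0 hβd1
      hMdef hM0 K hKdef α hαdef
  -- ### contradiction
  set R : ℝ := max (max R₀ 1) ((C/K + 1) ^ (α⁻¹)) with hRdef
  have h1 : R₀ ≤ R := le_trans (le_max_left _ _) (le_max_left _ _)
  have h2 : 1 ≤ R := le_trans (le_max_right _ _) (le_max_left _ _)
  have h3 : (C/K + 1) ^ (α⁻¹) ≤ R := le_max_right _ _
  have hbase : (0:ℝ) < C/K + 1 := by positivity
  have hRα : C/K + 1 ≤ R ^ α := by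
    calc C/K + 1 = ((C/K + 1) ^ (α⁻¹)) ^ α := by
          rw [← Real.rpow_mul hbase.le, inv_mul_cancel₀ (ne_of_gt hα0), Real.rpow_one]
      _ ≤ R ^ α := Real.rpow_le_rpow (by positivity) h3 hα0.le
  have hkey := key R h1 h2
  have hcontra : K * (C/K + 1) ≤ K * R ^ α := by
    exact mul_le_mul_of_nonneg_left hRα hK0.le
  have : K * (C/K + 1) = C + K := by field_simp
  linarith
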